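/- Let M be a matroid with ground set [m] and let u ∈ ℤ^m with Σ_{j=1}^m u_j = 1. Define A(u) = { i ∈ [m] : for every subset S ⊆ [m], Σ_{j∈S} u_j ≤ 1 if i ∈ cl_M(S) and Σ_{j∈S} u_j ≤ 0 if i ∉ cl_M(S) }. Then rk_M(A(u)) = 1 if u = e_i for some non-loop i of M, and rk_M(A(u)) = 0 otherwise. -/

import Mathlib

open scoped Classical

/-- The rank of a set `X` in a matroid `M`: the largest cardinality of an
independent subset of `X`. -/
noncomputable def matroidRk {α : Type*} (M : Matroid α) (X : Set α) : ℕ :=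
  sSup {n : ℕ | ∃ I, M.Indep I ∧ I ⊆ X ∧ I.ncard = n}

/-- The set `A(u) = {i : u ∈ P_i}` of global sections data: those `i ∈ [m]` such that
for every subset `S ⊆ [m]`, `∑_{j∈S} u_j ≤ 1` if `i ∈ cl_M(S)` and `∑_{j∈S} u_j ≤ 0`
if `i ∉ cl_M(S)`. -/
def Aglobal (m : ℕ) (M : Matroid (Fin m)) (u : Fin m → ℤ) : Set (Fin m) :=
  {i | ∀ S : Finset (Fin m),
    if i ∈ M.closure (S : Set (Fin m)) then (∑ j ∈ S, u j) ≤ 1 else (∑ j ∈ S, u j) ≤ 0}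

/-- The standard basis vector `e_i ∈ ℤ^m`. -/
def stdVec (m : ℕ) (i : Fin m) : Fin m → ℤ := fun j => if j = i then 1 else 0

lemma nonloop_indep {m : ℕ} {M : Matroid (Fin m)} (hE : M.E = Set.univ) {i : Fin m}
    (hi : i ∉ M.closure ∅) : M.Indep {i} := by
  by_contra h
  apply hi
  rw [M.empty_indep.mem_closure_iff']
  refine ⟨by simp [hE], fun h' => absurd h' (by simpa using h)⟩

lemma indep_singleton_nonloop {m : ℕ} {M : Matroid (Fin m)} {i : Fin m}
    (h : M.Indep {i}) : i ∉ M.closure ∅ := by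
  intro hmem
  rw [M.empty_indep.mem_closure_iff'] at hmem
  simpa using hmem.2 (by simpa using h)

/-- `h⁰(X_m, E_M)_u = rk_M(A(u))` equals `1` if `u = e_i` for some non-loop `i` of
`M`, and `0` otherwise. -/
theorem h0_tautological_bundle (m : ℕ) (M : Matroid (Fin m)) (hE : M.E = Set.univ)
    (u : Fin m → ℤ) (hu : ∑ j, u j = 1) :
    matroidRk M (Aglobal m M u) =
      (if ∃ i : Fin m, i ∉ M.closure ∅ ∧ u = stdVec m i then 1 else 0) := by
  by_cases hex : ∃ i : Fin m, i ∉ M.closure ∅ ∧ u = stdVec m i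
  · rw [if_pos hex]
    obtain ⟨i, hi, rfl⟩ := hex
    have hiE : i ∈ M.E := by simp [hE]
    have hsum : ∀ S : Finset (Fin m), (∑ j ∈ S, stdVec m i j) = if i ∈ S then 1 else 0 := by
      intro S; simp [stdVec, Finset.sum_ite_eq' S i (fun _ => (1 : ℤ))]
    -- A(u) = closure {i}
    have hA : Aglobal m M (stdVec m i) = M.closure {i} := by
      ext j
      constructor
      · intro hj
        have := hj ({i} : Finset (Fin m))
        rw [hsum] at this
        simp only [Finset.mem_singleton, if_pos rfl, Finset.coe_singleton] at this
        by_contra hcl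
        rw [if_neg hcl] at this
        norm_num at this
      · intro hj S
        rw [hsum]
        by_cases hjS : j ∈ M.closure (S : Set (Fin m))
        · rw [if_pos hjS]; split <;> norm_num
        · rw [if_neg hjS]
          have hiS : i ∉ S := by
            intro hiS
            exact hjS (M.closure_subset_closure (by simpa using hiS) hj)
          rw [if_neg hiS]
    rw [hA]
    have hIi : M.Indep {i} := nonloop_indep hE hi
    apply le_antisymm
    · have hmem1 : (1 : ℕ) ∈ {n : ℕ | ∃ I, M.Indep I ∧ I ⊆ M.closure {i} ∧ I.ncard = n} :=
        ⟨{i}, hIi, M.subset_closure {i} (by simp [hE]), Set.ncard_singleton i⟩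
      apply csSup_le ⟨1, hmem1⟩
      rintro n ⟨I, hI, hIA, rfl⟩
      obtain ⟨J, hJ, hIJ⟩ := Matroid.Indep.subset_isBasis_of_subset hI hIA (M.closure_subset_ground {i})
      have hb : M.IsBasis {i} (M.closure {i}) := hIi.isBasis_closure
      have hJe : J.encard = 1 := by
        rw [hJ.encard_eq_encard hb, Set.encard_singleton]
      have hIe : I.encard ≤ 1 := hJe ▸ Set.encard_le_encard hIJ
      rcases Set.encard_le_one_iff_eq.mp hIe with rfl | ⟨x, rfl⟩
      · simp
      · simp
    · apply le_csSup
      · refine ⟨1, ?_⟩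
        rintro n ⟨I, hI, hIA, rfl⟩
        obtain ⟨J, hJ, hIJ⟩ := Matroid.Indep.subset_isBasis_of_subset hI hIA (M.closure_subset_ground {i})
        have hb : M.IsBasis {i} (M.closure {i}) := hIi.isBasis_closure
        have hJe : J.encard = 1 := by
          rw [hJ.encard_eq_encard hb, Set.encard_singleton]
        have hIe : I.encard ≤ 1 := hJe ▸ Set.encard_le_encard hIJ
        rcases Set.encard_le_one_iff_eq.mp hIe with rfl | ⟨x, rfl⟩
        · simp
        · simp
      · exact ⟨{i}, hIi, M.subset_closure {i} (by simp [hE]), Set.ncard_singleton i⟩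

  · rw [if_neg hex]
    -- every independent subset of A(u) is empty
    have hempty : ∀ I : Set (Fin m), M.Indep I → I ⊆ Aglobal m M u → I = ∅ := by
      intro I hI hIA
      by_contra hne
      obtain ⟨j, hjI⟩ := Set.nonempty_iff_ne_empty.mpr hne
      have hjA : j ∈ Aglobal m M u := hIA hjI
      have hjnl : j ∉ M.closure ∅ := indep_singleton_nonloop (hI.subset (by simpa using hjI))
      have h1 : ∀ S : Finset (Fin m), (∑ k ∈ S, u k) ≤ 1 := by
        intro S
        have := hjA S
        split at this <;> omega
      have h0 : ∀ S : Finset (Fin m), j ∉ M.closure (S : Set (Fin m)) → (∑ k ∈ S, u k) ≤ 0 := by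
        intro S hS
        have := hjA S
        rwa [if_neg hS] at this
      set T : Finset (Fin m) := Finset.univ.filter (fun k => 0 < u k) with hT
      have hsplit : (∑ k ∈ T, u k) + (∑ k ∈ Finset.univ.filter (fun k => ¬ 0 < u k), u k) = 1 := by
        rw [Finset.sum_filter_add_sum_filter_not]; exact hu
      have hnotpos : (∑ k ∈ Finset.univ.filter (fun k => ¬ 0 < u k), u k) ≤ 0 :=
        Finset.sum_nonpos (fun k hk => by
          simp only [Finset.mem_filter] at hk; omega)
      have hT1 : (∑ k ∈ T, u k) = 1 := le_antisymm (h1 T) (by omega)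
      have hTcard : (T.card : ℤ) ≤ ∑ k ∈ T, u k := by
        calc (T.card : ℤ) = ∑ _k ∈ T, (1 : ℤ) := by simp
        _ ≤ ∑ k ∈ T, u k := Finset.sum_le_sum (fun k hk => by
            simp only [hT, Finset.mem_filter] at hk; omega)
      have hTne : T.Nonempty := by
        rw [Finset.nonempty_iff_ne_empty]
        intro h
        rw [h] at hT1; simp at hT1
      have hTone : T.card = 1 := by
        have := hTne.card_pos
        omega
      obtain ⟨i, hTi⟩ := Finset.card_eq_one.mp hTone
      have hui : u i = 1 := by rw [hTi] at hT1; simpa using hT1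
      have hzero : ∀ k, k ≠ i → u k = 0 := by
        have hzsum : (∑ k ∈ Finset.univ.filter (fun k => ¬ 0 < u k), u k) = 0 := by omega
        have := (Finset.sum_eq_zero_iff_of_nonpos (fun k hk => by
          simp only [Finset.mem_filter] at hk; omega)).mp hzsum
        intro k hk
        have hkT : k ∉ T := by rw [hTi]; simpa using hk
        have : k ∈ Finset.univ.filter (fun k => ¬ 0 < u k) → u k = 0 := fun h => this k h
        apply this
        simp only [Finset.mem_filter, Finset.mem_univ, true_and]
        intro hpos
        exact hkT (by simp [hT, Finset.mem_filter, hpos])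
      have huv : u = stdVec m i := by
        funext k
        by_cases hk : k = i
        · subst hk; simpa [stdVec] using hui
        · simp [stdVec, hk, hzero k hk]
      -- i must be a loop, by hex; derive contradiction
      have hjcl : j ∈ M.closure ({i} : Set (Fin m)) := by
        by_contra hcl
        have := h0 ({i} : Finset (Fin m)) (by simpa using hcl)
        simp [hui] at this
      have hiloop : i ∈ M.closure ∅ := by
        by_contra hinl
        exact hex ⟨i, hinl, huv⟩
      have : M.closure ({i} : Set (Fin m)) ⊆ M.closure ∅ :=
        M.closure_subset_closure_of_subset_closure (by simpa using hiloop)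
      exact hjnl (this hjcl)
    apply le_antisymm
    · have hmem0 : (0 : ℕ) ∈ {n : ℕ | ∃ I, M.Indep I ∧ I ⊆ Aglobal m M u ∧ I.ncard = n} :=
        ⟨∅, M.empty_indep, Set.empty_subset _, Set.ncard_empty _⟩
      apply csSup_le ⟨0, hmem0⟩
      rintro n ⟨I, hI, hIA, rfl⟩
      rw [hempty I hI hIA]; simp
    · exact Nat.zero_le _
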